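/- Let f_1, …, f_n : ℝ^d → ℝ be real-analytic and let x* be an interpolating minimizer, i.e., ∇f_i(x*) = 0 and ∇²f_i(x*) is positive definite for every i. Fix a batch size B and a step size η > 0 satisfying η < min over all size-B batches B of 2/λ_max(∇²L̂_B(x*)). Then there exists ρ > 0 such that for every initial point x_0 with ‖x_0 − x*‖ < ρ, the SGD iterates x_t with step size η satisfy ρ^{−k}·E[‖x_t − x*‖_k^k] → 0 as t → ∞ for every even positive integer k, where ‖y‖_k^k = Σ_{i=1}^d |y_i|^k. -/

import Mathlib

open MeasureTheory ProbabilityTheory Filter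
open scoped ENNReal

/-- Discrete measurable structure on batches (finite sets of sample indices). -/
instance finsetMeasurableSpace {α : Type*} : MeasurableSpace (Finset α) := ⊤

/-- The batch loss `L̂_B(x) = (1/B) ∑_{i ∈ B} f_i(x)`. -/
noncomputable def batchLoss {n d : ℕ} (f : Fin n → EuclideanSpace ℝ (Fin d) → ℝ) (B : ℕ)
    (S : Finset (Fin n)) (x : EuclideanSpace ℝ (Fin d)) : ℝ :=
  (B : ℝ)⁻¹ * ∑ i ∈ S, f i x

section Helpers

open InnerProductSpace
local notation "⟪" x ", " y "⟫" => @inner ℝ _ _ x y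

lemma sym_opnorm_bound {E : Type*} [NormedAddCommGroup E] [InnerProductSpace ℝ E]
    (A : E →L[ℝ] E) (hsym : ∀ u v : E, ⟪A u, v⟫ = ⟪A v, u⟫) {M : ℝ} (hM : 0 ≤ M)
    (h : ∀ u : E, |⟪A u, u⟫| ≤ M * ‖u‖ ^ 2) : ∀ u : E, ‖A u‖ ≤ M * ‖u‖ := by
  intro u
  by_cases hAu : A u = 0
  · simp [hAu]; positivity
  have hu : u ≠ 0 := fun h0 => hAu (by simp [h0])
  have hu0 : (0:ℝ) < ‖u‖ := norm_pos_iff.mpr hu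
  have hAu0 : (0:ℝ) < ‖A u‖ := norm_pos_iff.mpr hAu
  set v : E := (‖u‖ / ‖A u‖) • A u with hv
  have hvn : ‖v‖ = ‖u‖ := by
    rw [hv, norm_smul, Real.norm_eq_abs, abs_of_nonneg (by positivity), div_mul_cancel₀]
    exact ne_of_gt hAu0
  have key : ⟪A (u + v), u + v⟫ - ⟪A (u - v), u - v⟫ = 4 * ⟪A u, v⟫ := by
    have h1 : ⟪A v, u⟫ = ⟪A u, v⟫ := hsym v u
    simp only [map_add, map_sub, inner_add_left, inner_add_right, inner_sub_left,
      inner_sub_right, h1]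
    ring
  have hb : 4 * ⟪A u, v⟫ ≤ M * (2 * ‖u‖ ^ 2 + 2 * ‖v‖ ^ 2) := by
    rw [← key]
    have hp : ‖u + v‖ ^ 2 + ‖u - v‖ ^ 2 = 2 * ‖u‖ ^ 2 + 2 * ‖v‖ ^ 2 := by
      rw [norm_add_sq_real, norm_sub_sq_real]; ring
    have h1 := (abs_le.mp (h (u + v))).2
    have h2 := (abs_le.mp (h (u - v))).1
    calc ⟪A (u + v), u + v⟫ - ⟪A (u - v), u - v⟫
        ≤ M * ‖u + v‖ ^ 2 + M * ‖u - v‖ ^ 2 := by linarith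
      _ = M * (2 * ‖u‖ ^ 2 + 2 * ‖v‖ ^ 2) := by rw [← mul_add, hp]
  have hiv : ⟪A u, v⟫ = ‖u‖ * ‖A u‖ := by
    rw [hv, real_inner_smul_right, real_inner_self_eq_norm_sq]
    field_simp
  rw [hiv, hvn] at hb
  nlinarith

lemma contraction_helper {E : Type*} [NormedAddCommGroup E] [InnerProductSpace ℝ E]
    [FiniteDimensional ℝ E] [Nontrivial E] (L : E → ℝ) (hL : AnalyticOnNhd ℝ L Set.univ)
    (xstar : E) (η : ℝ) (hη : 0 < η)
    (hpos : ∀ u : E, u ≠ 0 → 0 < fderiv ℝ (fderiv ℝ L) xstar u u)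
    (hsb : ∀ u : E, ‖u‖ = 1 → η * fderiv ℝ (fderiv ℝ L) xstar u u < 2) :
    ∃ c ε : ℝ, 0 ≤ c ∧ c < 1 ∧ 0 < ε ∧ ∀ y ∈ Metric.closedBall xstar ε,
      ∀ z ∈ Metric.closedBall xstar ε,
      ‖(y - η • gradient L y) - (z - η • gradient L z)‖ ≤ c * ‖y - z‖ := by
  classical
  set eCLM : (E →L[ℝ] ℝ) →L[ℝ] E := (toDual ℝ E).symm.toLinearIsometry.toContinuousLinearMap
  have heCLM : ∀ w : E →L[ℝ] ℝ, eCLM w = (toDual ℝ E).symm w := fun w => rfl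
  have hDa : AnalyticOnNhd ℝ (fderiv ℝ L) Set.univ := hL.fderiv
  have hGe : gradient L = fun y => eCLM (fderiv ℝ L y) := rfl
  have hH : ∀ y : E, HasFDerivAt (gradient L)
      (eCLM.comp (fderiv ℝ (fderiv ℝ L) y)) y := by
    intro y
    rw [hGe]
    exact (eCLM.hasFDerivAt).comp y ((hDa y trivial).differentiableAt.hasFDerivAt)
  set H : E → (E →L[ℝ] E) := fun y => eCLM.comp (fderiv ℝ (fderiv ℝ L) y) with hHdef
  have hDcont : Continuous (fderiv ℝ (fderiv ℝ L)) :=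
    continuousOn_univ.mp (hDa.fderiv.continuousOn)
  have hHcont : Continuous H :=
    (((ContinuousLinearMap.compL ℝ E (E →L[ℝ] ℝ) E) eCLM).continuous).comp hDcont
  have hinner : ∀ u v : E, ⟪H xstar u, v⟫ = fderiv ℝ (fderiv ℝ L) xstar u v := by
    intro u v
    rw [hHdef]
    exact toDual_symm_apply
  have hcd : ContDiff ℝ 2 L := hL.contDiff
  have hsymm : ∀ u v : E, fderiv ℝ (fderiv ℝ L) xstar u v
      = fderiv ℝ (fderiv ℝ L) xstar v u := hcd.contDiffAt.isSymmSndFDerivAt (by simp)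
  set A : E →L[ℝ] E := ContinuousLinearMap.id ℝ E - η • H xstar with hAdef
  have hAapp : ∀ u v : E, ⟪A u, v⟫ = ⟪u, v⟫ - η * fderiv ℝ (fderiv ℝ L) xstar u v := by
    intro u v
    rw [hAdef]
    simp only [ContinuousLinearMap.sub_apply, ContinuousLinearMap.id_apply,
      ContinuousLinearMap.smul_apply, inner_sub_left, real_inner_smul_left]
    rw [hinner]
  have hAsym : ∀ u v : E, ⟪A u, v⟫ = ⟪A v, u⟫ := by
    intro u v
    rw [hAapp, hAapp, hsymm u v, real_inner_comm]
  obtain ⟨u₀, hu₀s, hmax'⟩ := (isCompact_sphere (0:E) 1).exists_isMaxOn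
    (NormedSpace.sphere_nonempty.mpr one_pos.le)
    ((continuous_abs.comp ((A.continuous.inner continuous_id))).continuousOn :
      ContinuousOn (fun u : E => |⟪A u, u⟫|) _)
  have hmax : ∀ w ∈ Metric.sphere (0:E) 1, |⟪A w, w⟫| ≤ |⟪A u₀, u₀⟫| := fun w hw => hmax' hw
  set c : ℝ := |⟪A u₀, u₀⟫| with hcdef
  have hu₀ : ‖u₀‖ = 1 := mem_sphere_zero_iff_norm.mp hu₀s
  have hu₀ne : u₀ ≠ 0 := fun h => by simp [h] at hu₀
  have hc1 : c < 1 := by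
    have h1 : ⟪A u₀, u₀⟫ = 1 - η * fderiv ℝ (fderiv ℝ L) xstar u₀ u₀ := by
      rw [hAapp, real_inner_self_eq_norm_sq, hu₀]; ring
    rw [hcdef, h1, abs_lt]
    constructor
    · nlinarith [hsb u₀ hu₀]
    · nlinarith [hpos u₀ hu₀ne]
  have hquad : ∀ u : E, |⟪A u, u⟫| ≤ c * ‖u‖ ^ 2 := by
    intro u
    by_cases hu : u = 0
    · simp [hu]
    have hn : (0:ℝ) < ‖u‖ := norm_pos_iff.mpr hu
    set w : E := ‖u‖⁻¹ • u with hwdef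
    have hw : w ∈ Metric.sphere (0:E) 1 := by
      simp [hwdef, norm_smul, abs_of_nonneg (inv_nonneg.mpr hn.le), inv_mul_cancel₀ hn.ne']
    have hu_eq : u = ‖u‖ • w := by rw [hwdef, smul_smul, mul_inv_cancel₀ hn.ne', one_smul]
    have hscale : ⟪A u, u⟫ = ‖u‖ ^ 2 * ⟪A w, w⟫ := by
      calc ⟪A u, u⟫ = ⟪A (‖u‖ • w), ‖u‖ • w⟫ := by rw [← hu_eq]
        _ = ‖u‖ ^ 2 * ⟪A w, w⟫ := by
            rw [A.map_smul, real_inner_smul_left, real_inner_smul_right]; ring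
    rw [hscale, abs_mul, abs_of_nonneg (by positivity : (0:ℝ) ≤ ‖u‖ ^ 2)]
    have := hmax w hw
    nlinarith [abs_nonneg ⟪A w, w⟫]
  have hAle : ∀ u : E, ‖A u‖ ≤ c * ‖u‖ :=
    sym_opnorm_bound A hAsym (abs_nonneg _) hquad
  have hAnorm : ‖A‖ ≤ c := A.opNorm_le_bound (abs_nonneg _) hAle
  set c' : ℝ := (1 + c) / 2 with hc'def
  have hcc' : c < c' := by rw [hc'def]; linarith
  have hc'1 : c' < 1 := by rw [hc'def]; linarith
  have hc'0 : 0 ≤ c' := le_trans (abs_nonneg _) hcc'.le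
  have hcont : Continuous fun y : E => ‖ContinuousLinearMap.id ℝ E - η • H y‖ :=
    continuous_norm.comp (continuous_const.sub (hHcont.const_smul η))
  have hev : {y : E | ‖ContinuousLinearMap.id ℝ E - η • H y‖ < c'} ∈ nhds xstar := by
    have : (fun y : E => ‖ContinuousLinearMap.id ℝ E - η • H y‖) ⁻¹' Set.Iio c' ∈ nhds xstar :=
      (hcont.continuousAt).preimage_mem_nhds (Iio_mem_nhds (lt_of_le_of_lt hAnorm hcc'))
    exact this
  obtain ⟨ε, hε, hball⟩ := Metric.mem_nhds_iff.mp hev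
  refine ⟨c', ε / 2, hc'0, hc'1, by linarith, ?_⟩
  intro y hy z hz
  have hconv : Convex ℝ (Metric.closedBall xstar (ε / 2)) := convex_closedBall _ _
  have := hconv.norm_image_sub_le_of_norm_hasFDerivWithin_le
    (f := fun w => w - η • gradient L w)
    (f' := fun w => ContinuousLinearMap.id ℝ E - η • H w)
    (fun w _ => (((hasFDerivAt_id w).sub ((hH w).const_smul η)).hasFDerivWithinAt))
    (fun w hw => le_of_lt (hball (lt_of_le_of_lt (Metric.mem_closedBall.mp hw) (by linarith))))
    hz hy
  exact this

lemma coord_abs_le_norm {d : ℕ} (y : EuclideanSpace ℝ (Fin d)) (i : Fin d) : |y i| ≤ ‖y‖ := by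
  rw [EuclideanSpace.norm_eq, ← Real.sqrt_sq_eq_abs]
  apply Real.sqrt_le_sqrt
  have : y i ^ 2 ≤ ∑ j, ‖y j‖ ^ 2 := by
    have := Finset.single_le_sum (f := fun j => ‖y j‖ ^ 2)
      (fun j _ => by positivity) (Finset.mem_univ i)
    simpa [Real.norm_eq_abs, sq_abs] using this
  exact this

end Helpers
set_option maxHeartbeats 1000000 in
theorem stmt5 {n d B : ℕ} (hB : 0 < B) (hBn : B ≤ n)
    (f : Fin n → EuclideanSpace ℝ (Fin d) → ℝ)
    (hf : ∀ i, AnalyticOnNhd ℝ (f i) Set.univ)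
    (xstar : EuclideanSpace ℝ (Fin d))
    (hgrad : ∀ i, gradient (f i) xstar = 0)
    (hhess : ∀ i (u : EuclideanSpace ℝ (Fin d)), u ≠ 0 →
      0 < iteratedFDeriv ℝ 2 (f i) xstar ![u, u])
    (η : ℝ) (hη : 0 < η)
    (hstab : ∀ S : Finset (Fin n), S.card = B → ∀ u : EuclideanSpace ℝ (Fin d), ‖u‖ = 1 →
      η * iteratedFDeriv ℝ 2 (batchLoss f B S) xstar ![u, u] < 2) :
    ∃ ρ > (0 : ℝ), ∀ x0 : EuclideanSpace ℝ (Fin d), ‖x0 - xstar‖ < ρ →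
      ∀ (Ω : Type) (_ : MeasurableSpace Ω) (μ : Measure Ω), IsProbabilityMeasure μ →
      ∀ Bt : ℕ → Ω → Finset (Fin n), (∀ t, Measurable (Bt t)) →
        iIndepFun Bt μ →
        (∀ t (S : Finset (Fin n)), μ {ω | Bt t ω = S} =
          if S.card = B then ((n.choose B : ℝ≥0∞))⁻¹ else 0) →
      ∀ x : ℕ → Ω → EuclideanSpace ℝ (Fin d), (∀ ω, x 0 ω = x0) →
        (∀ t ω, x (t + 1) ω = x t ω - η • gradient (batchLoss f B (Bt t ω)) (x t ω)) →
      ∀ k : ℕ, Even k → 0 < k →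
        Tendsto (fun t : ℕ => (ρ ^ k)⁻¹ * ∫ ω, ∑ i, |(x t ω - xstar) i| ^ k ∂μ)
          atTop (nhds 0) := by
  classical
  by_cases hd : d = 0
  · -- trivial case: zero-dimensional space
    subst hd
    refine ⟨1, one_pos, ?_⟩
    intro x0 _ Ω _ μ _ Bt _ _ _ x _ _ k _ _
    have heq : (fun t : ℕ => ((1:ℝ) ^ k)⁻¹ * ∫ ω, ∑ i, |(x t ω - xstar) i| ^ k ∂μ)
        = fun _ => 0 := by
      funext t
      simp
    rw [heq]
    exact tendsto_const_nhds
  -- main case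
  haveI : Nonempty (Fin d) := ⟨⟨0, Nat.pos_of_ne_zero hd⟩⟩
  haveI : Nontrivial (EuclideanSpace ℝ (Fin d)) := by
    refine ⟨0, EuclideanSpace.single ⟨0, Nat.pos_of_ne_zero hd⟩ (1:ℝ), ?_⟩
    intro h
    have h2 := congrArg
      (fun z : EuclideanSpace ℝ (Fin d) => z ⟨0, Nat.pos_of_ne_zero hd⟩) h
    simp only [EuclideanSpace.single_apply, if_pos rfl] at h2
    exact zero_ne_one (h2 : (0:ℝ) = 1)
  -- differentiability basics
  have hdf : ∀ i, Differentiable ℝ (f i) := fun i y => (hf i y trivial).differentiableAt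
  have hfd1 : ∀ S : Finset (Fin n),
      fderiv ℝ (batchLoss f B S) = fun y => (B:ℝ)⁻¹ • ∑ i ∈ S, fderiv ℝ (f i) y := by
    intro S
    funext y
    show fderiv ℝ (fun z => (B:ℝ)⁻¹ * ∑ i ∈ S, f i z) y = _
    rw [fderiv_const_mul (DifferentiableAt.fun_sum fun i _ => hdf i y) ((B:ℝ)⁻¹),
      fderiv_fun_sum (fun i _ => hdf i y)]
  have hfi0 : ∀ i, fderiv ℝ (f i) xstar = 0 := by
    intro i
    have h := congrArg (InnerProductSpace.toDual ℝ (EuclideanSpace ℝ (Fin d))) (hgrad i)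
    simpa [gradient] using h
  have hgrad0 : ∀ S : Finset (Fin n), gradient (batchLoss f B S) xstar = 0 := by
    intro S
    have h0 : fderiv ℝ (batchLoss f B S) xstar = 0 := by
      rw [hfd1 S]
      simp [hfi0]
    show (InnerProductSpace.toDual ℝ (EuclideanSpace ℝ (Fin d))).symm
      (fderiv ℝ (batchLoss f B S) xstar) = 0
    rw [h0]; exact map_zero _
  -- analyticity of batch losses
  have hLa : ∀ S : Finset (Fin n), AnalyticOnNhd ℝ (batchLoss f B S) Set.univ := by
    intro S
    exact analyticOnNhd_const.mul (Finset.analyticOnNhd_fun_sum S fun i _ => hf i)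
  -- second derivative decomposition
  have hiterg : ∀ (g : EuclideanSpace ℝ (Fin d) → ℝ) (u : EuclideanSpace ℝ (Fin d)),
      iteratedFDeriv ℝ 2 g xstar ![u, u] = fderiv ℝ (fderiv ℝ g) xstar u u := by
    intro g u
    rw [iteratedFDeriv_two_apply]
    simp
  have hD2 : ∀ (S : Finset (Fin n)) (u : EuclideanSpace ℝ (Fin d)),
      fderiv ℝ (fderiv ℝ (batchLoss f B S)) xstar u u
        = (B:ℝ)⁻¹ * ∑ i ∈ S, fderiv ℝ (fderiv ℝ (f i)) xstar u u := by
    intro S u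
    have h2 : fderiv ℝ (fderiv ℝ (batchLoss f B S)) xstar
        = (B:ℝ)⁻¹ • ∑ i ∈ S, fderiv ℝ (fderiv ℝ (f i)) xstar := by
      rw [hfd1 S]
      rw [fderiv_fun_const_smul (DifferentiableAt.fun_sum fun i _ =>
        ((hf i).fderiv xstar trivial).differentiableAt) ((B:ℝ)⁻¹),
        fderiv_fun_sum (fun i _ => ((hf i).fderiv xstar trivial).differentiableAt)]
    rw [h2]
    simp [ContinuousLinearMap.smul_apply, ContinuousLinearMap.sum_apply, Finset.mul_sum]
  have hpos : ∀ (S : Finset (Fin n)), S.card = B → ∀ u : EuclideanSpace ℝ (Fin d), u ≠ 0 →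
      0 < fderiv ℝ (fderiv ℝ (batchLoss f B S)) xstar u u := by
    intro S hS u hu
    rw [hD2 S u]
    have hSne : S.Nonempty := Finset.card_pos.mp (by rw [hS]; exact hB)
    have hsum : 0 < ∑ i ∈ S, fderiv ℝ (fderiv ℝ (f i)) xstar u u := by
      apply Finset.sum_pos _ hSne
      intro i _
      have := hhess i u hu
      rwa [hiterg (f i) u] at this
    positivity
  have hsb : ∀ (S : Finset (Fin n)), S.card = B → ∀ u : EuclideanSpace ℝ (Fin d), ‖u‖ = 1 →
      η * fderiv ℝ (fderiv ℝ (batchLoss f B S)) xstar u u < 2 := by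
    intro S hS u hu
    have := hstab S hS u hu
    rwa [hiterg (batchLoss f B S) u] at this
  -- per-batch contraction constants via choice
  have hP : ∀ S : {S : Finset (Fin n) // S.card = B}, ∃ c ε : ℝ, 0 ≤ c ∧ c < 1 ∧ 0 < ε ∧
      ∀ y ∈ Metric.closedBall xstar ε, ∀ z ∈ Metric.closedBall xstar ε,
      ‖(y - η • gradient (batchLoss f B S.1) y) - (z - η • gradient (batchLoss f B S.1) z)‖
        ≤ c * ‖y - z‖ := fun S =>
    contraction_helper (batchLoss f B S.1) (hLa S.1) xstar η hη
      (fun u hu => hpos S.1 S.2 u hu) (fun u hu => hsb S.1 S.2 u hu)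
  choose c ε hc0 hc1 hε hcon using hP
  haveI hne : Nonempty {S : Finset (Fin n) // S.card = B} := by
    obtain ⟨S0, _, hS0⟩ := Finset.exists_subset_card_eq
      (s := (Finset.univ : Finset (Fin n))) (n := B) (by simpa using hBn)
    exact ⟨⟨S0, hS0⟩⟩
  set κ : ℝ := Finset.univ.sup' Finset.univ_nonempty c with hκdef
  have hκ1 : κ < 1 := (Finset.sup'_lt_iff _).mpr fun S _ => hc1 S
  have hκ0 : 0 ≤ κ := by
    obtain ⟨S0⟩ := hne
    exact le_trans (hc0 S0) (Finset.le_sup' c (Finset.mem_univ S0))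
  set ρ : ℝ := Finset.univ.inf' Finset.univ_nonempty ε with hρdef
  have hρ : 0 < ρ := (Finset.lt_inf'_iff _).mpr fun S _ => hε S
  refine ⟨ρ, hρ, ?_⟩
  intro x0 hx0 Ω mΩ μ hμ Bt hBtm hindep hdist x hx00 hrec k hkeven hkpos
  -- uniform contraction for batches of size B
  have hcontr : ∀ S : Finset (Fin n), S.card = B → ∀ y ∈ Metric.closedBall xstar ρ,
      ‖(y - η • gradient (batchLoss f B S) y) - xstar‖ ≤ κ * ‖y - xstar‖ := by
    intro S hS y hy
    set S' : {S : Finset (Fin n) // S.card = B} := ⟨S, hS⟩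
    have hsub : Metric.closedBall xstar ρ ⊆ Metric.closedBall xstar (ε S') :=
      Metric.closedBall_subset_closedBall (Finset.inf'_le ε (Finset.mem_univ S'))
    have h1 := hcon S' y (hsub hy) xstar (Metric.mem_closedBall_self (hε S').le)
    rw [hgrad0 S] at h1
    simp only [smul_zero, sub_zero] at h1
    calc ‖(y - η • gradient (batchLoss f B S) y) - xstar‖
        ≤ c S' * ‖y - xstar‖ := h1
      _ ≤ κ * ‖y - xstar‖ := by
          apply mul_le_mul_of_nonneg_right _ (norm_nonneg _)
          exact Finset.le_sup' c (Finset.mem_univ S')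
  -- a.e. all batches have cardinality B
  have hcard_ae : ∀ᵐ ω ∂μ, ∀ t : ℕ, (Bt t ω).card = B := by
    rw [ae_all_iff]
    intro t
    rw [ae_iff]
    have hsub : {ω | ¬ (Bt t ω).card = B} ⊆
        ⋃ S : {S : Finset (Fin n) // S.card ≠ B}, {ω | Bt t ω = (S : Finset (Fin n))} := by
      intro ω hω
      exact Set.mem_iUnion.mpr ⟨⟨Bt t ω, hω⟩, rfl⟩
    refine measure_mono_null hsub (measure_iUnion_null fun S => ?_)
    rw [hdist t S]
    simp [S.2]
  -- a.e. geometric decay of iterates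
  have hbound : ∀ᵐ ω ∂μ, ∀ t : ℕ, ‖x t ω - xstar‖ ≤ κ ^ t * ρ := by
    filter_upwards [hcard_ae] with ω hω
    intro t
    induction t with
    | zero => simpa [hx00 ω] using hx0.le
    | succ t ih =>
      have hκtρ : κ ^ t * ρ ≤ ρ := by
        have h1 : κ ^ t ≤ 1 := pow_le_one₀ hκ0 hκ1.le
        nlinarith
      have hyball : x t ω ∈ Metric.closedBall xstar ρ := by
        rw [Metric.mem_closedBall, dist_eq_norm]
        exact ih.trans hκtρ
      have h2 := hcontr (Bt t ω) (hω t) (x t ω) hyball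
      rw [hrec t ω]
      calc ‖(x t ω - η • gradient (batchLoss f B (Bt t ω)) (x t ω)) - xstar‖
          ≤ κ * ‖x t ω - xstar‖ := h2
        _ ≤ κ * (κ ^ t * ρ) := mul_le_mul_of_nonneg_left ih hκ0
        _ = κ ^ (t + 1) * ρ := by ring
  -- integral bound
  have hint : ∀ t : ℕ, (∫ ω, ∑ i, |(x t ω - xstar) i| ^ k ∂μ) ≤ d * (κ ^ t * ρ) ^ k := by
    intro t
    have hptbd : ∀ᵐ ω ∂μ, ‖∑ i, |(x t ω - xstar) i| ^ k‖ ≤ d * (κ ^ t * ρ) ^ k := by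
      filter_upwards [hbound] with ω hω
      have h1 : ∀ i : Fin d, |(x t ω - xstar) i| ^ k ≤ (κ ^ t * ρ) ^ k := by
        intro i
        apply pow_le_pow_left₀ (abs_nonneg _)
        exact (coord_abs_le_norm (x t ω - xstar) i).trans (hω t)
      rw [Real.norm_eq_abs, abs_of_nonneg (Finset.sum_nonneg fun i _ => by positivity)]
      calc ∑ i, |(x t ω - xstar) i| ^ k ≤ ∑ _i : Fin d, (κ ^ t * ρ) ^ k :=
            Finset.sum_le_sum fun i _ => h1 i
        _ = d * (κ ^ t * ρ) ^ k := by
            rw [Finset.sum_const, Finset.card_univ, Fintype.card_fin, nsmul_eq_mul]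
    have h2 := norm_integral_le_of_norm_le_const hptbd
    rw [probReal_univ, mul_one] at h2
    exact le_trans (le_abs_self _) h2
  -- squeeze
  have hρk : (0:ℝ) < ρ ^ k := by positivity
  have hnn : ∀ t : ℕ, 0 ≤ (ρ ^ k)⁻¹ * ∫ ω, ∑ i, |(x t ω - xstar) i| ^ k ∂μ := fun t =>
    mul_nonneg (inv_nonneg.mpr hρk.le)
      (integral_nonneg fun ω => Finset.sum_nonneg fun i _ => by positivity)
  have hub : ∀ t : ℕ, (ρ ^ k)⁻¹ * (∫ ω, ∑ i, |(x t ω - xstar) i| ^ k ∂μ)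
      ≤ d * (κ ^ k) ^ t := by
    intro t
    calc (ρ ^ k)⁻¹ * (∫ ω, ∑ i, |(x t ω - xstar) i| ^ k ∂μ)
        ≤ (ρ ^ k)⁻¹ * (d * (κ ^ t * ρ) ^ k) :=
          mul_le_mul_of_nonneg_left (hint t) (inv_nonneg.mpr hρk.le)
      _ = d * (κ ^ k) ^ t := by
          rw [mul_pow, ← pow_mul, ← pow_mul, mul_comm t k]
          field_simp
  have hκk1 : κ ^ k < 1 := pow_lt_one₀ hκ0 hκ1 hkpos.ne'
  have hlim : Tendsto (fun t : ℕ => (d:ℝ) * (κ ^ k) ^ t) atTop (nhds 0) := by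
    have := (tendsto_pow_atTop_nhds_zero_of_lt_one (pow_nonneg hκ0 k) hκk1).const_mul (d:ℝ)
    simpa using this
  exact squeeze_zero hnn hub hlim
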